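/- Let A be a C*-algebra and L : A_sa → [0,∞] an extended seminorm on the self-adjoint part A_sa of A such that the set {b ∈ A_sa : L(b) < ∞} is norm dense in A_sa. If (φ_n) is a sequence of states on A and φ is a state on A with d_L(φ_n, φ) → 0, then φ_n converges to φ in the weak-* topology, i.e. φ_n(a) → φ(a) for every a ∈ A. -/

import Mathlib

open Filter Topology
open scoped ComplexOrder ENNReal NNReal MultiplierAlgebra

noncomputable section

/-- A *state* on a C⋆-algebra: a continuous linear functional into `ℂ` that is nonnegative
on nonnegative elements and has norm `1`. -/
def IsState {E : Type*} [NormedAddCommGroup E] [NormedSpace ℂ E] [PartialOrder E]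
    (φ : E →L[ℂ] ℂ) : Prop :=
  (∀ a : E, 0 ≤ a → 0 ≤ φ a) ∧ ‖φ‖ = 1

variable {A : Type*} [NonUnitalCStarAlgebra A] [PartialOrder A] [StarOrderedRing A]

/-- `L` is an extended seminorm on the self-adjoint part `A_sa` of `A`:
`L (t • b) = |t| * L b` for real `t`, and `L (b + b') ≤ L b + L b'`. -/
def IsESeminorm (L : selfAdjoint A → ℝ≥0∞) : Prop :=
  (∀ (t : ℝ) (b : selfAdjoint A), L (t • b) = (‖t‖₊ : ℝ≥0∞) * L b) ∧
    ∀ b b' : selfAdjoint A, L (b + b') ≤ L b + L b'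

/-- The spectral distance `d_L(φ, ψ) = sup { |φ b - ψ b| : b ∈ A_sa, L b ≤ 1 }`,
valued in `[0, ∞]`. -/
def dL (L : selfAdjoint A → ℝ≥0∞) (φ ψ : A → ℂ) : ℝ≥0∞ :=
  ⨆ b : {b : selfAdjoint A // L b ≤ 1}, (‖φ (b.1 : A) - ψ (b.1 : A)‖₊ : ℝ≥0∞)

/-- An approximate identity for `A`: a net `(I n)` with `0 ≤ I n`, `‖I n‖ ≤ 1`, and
`‖I n * a - a‖ → 0`, `‖a * I n - a‖ → 0` for every `a : A`. -/
def IsApproxUnit {ι : Type*} [Preorder ι] (I : ι → A) : Prop :=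
  (∀ n, 0 ≤ I n) ∧ (∀ n, ‖I n‖ ≤ 1) ∧
    ∀ a : A, Tendsto (fun n => ‖I n * a - a‖) atTop (𝓝 0) ∧
      Tendsto (fun n => ‖a * I n - a‖) atTop (𝓝 0)

/-- If `{b ∈ A_sa : L b < ∞}` is norm dense in `A_sa` and `d_L(φ_n, φ) → 0` for states
`φ_n, φ`, then `φ_n → φ` in the weak-* topology. -/
theorem dL_tendsto_implies_weakStar (L : selfAdjoint A → ℝ≥0∞) (hL : IsESeminorm L)
    (hdense : Dense {b : selfAdjoint A | L b < ⊤})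
    (φn : ℕ → A →L[ℂ] ℂ) (hφn : ∀ n, IsState (φn n))
    (φ : A →L[ℂ] ℂ) (hφ : IsState φ)
    (hconv : Tendsto (fun n => dL L ⇑(φn n) ⇑φ) atTop (𝓝 0)) :
    ∀ a : A, Tendsto (fun n => φn n a) atTop (𝓝 (φ a)) := by
  -- Step 1: convergence on self-adjoint elements of finite seminorm
  have hfin : ∀ b : selfAdjoint A, L b < ⊤ →
      Tendsto (fun n => φn n (b : A)) atTop (𝓝 (φ (b : A))) := by
    intro b hb
    set r : ℝ≥0 := max (L b).toNNReal 1 with hrdef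
    have hr1 : (1 : ℝ≥0) ≤ r := le_max_right _ _
    have hrR : (0 : ℝ) < (r : ℝ) := by exact_mod_cast lt_of_lt_of_le one_pos hr1
    have hrne : ((r : ℝ)) ≠ 0 := ne_of_gt hrR
    have hLb' : L (((r : ℝ)⁻¹) • b) ≤ 1 := by
      rw [hL.1]
      have h1 : L b ≤ (r : ℝ≥0∞) := by
        calc L b = ((L b).toNNReal : ℝ≥0∞) := (ENNReal.coe_toNNReal hb.ne).symm
        _ ≤ (r : ℝ≥0∞) := by exact_mod_cast le_max_left _ _
      have h2 : (‖(r : ℝ)⁻¹‖₊ : ℝ≥0∞) = (r⁻¹ : ℝ≥0) := by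
        simp [nnnorm_inv, NNReal.nnnorm_eq]
      rw [h2]
      calc ((r⁻¹ : ℝ≥0) : ℝ≥0∞) * L b ≤ ((r⁻¹ : ℝ≥0) : ℝ≥0∞) * (r : ℝ≥0∞) :=
            mul_le_mul_right h1 _
        _ = ((r⁻¹ * r : ℝ≥0) : ℝ≥0∞) := by rw [ENNReal.coe_mul]
        _ = 1 := by
            rw [inv_mul_cancel₀ (by exact_mod_cast ne_of_gt hrR : r ≠ 0)]; simp
    -- the key pointwise bound
    have key : ∀ n, (‖φn n (b : A) - φ (b : A)‖₊ : ℝ≥0∞) ≤ (r : ℝ≥0∞) * dL L (φn n) φ := by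
      intro n
      have hcoe : ((((r : ℝ)⁻¹) • b : selfAdjoint A) : A) = ((r : ℝ)⁻¹) • (b : A) := rfl
      have heq : φn n (b : A) - φ (b : A)
          = (r : ℝ) • (φn n ((((r : ℝ)⁻¹) • b : selfAdjoint A) : A)
              - φ ((((r : ℝ)⁻¹) • b : selfAdjoint A) : A)) := by
        rw [hcoe, ContinuousLinearMap.map_smul_of_tower, ContinuousLinearMap.map_smul_of_tower, ← smul_sub, smul_smul,
          mul_inv_cancel₀ hrne, one_smul]
      rw [heq, nnnorm_smul]
      have hle : (‖φn n ((((r : ℝ)⁻¹) • b : selfAdjoint A) : A)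
          - φ ((((r : ℝ)⁻¹) • b : selfAdjoint A) : A)‖₊ : ℝ≥0∞) ≤ dL L (φn n) φ :=
        le_iSup (fun c : {b : selfAdjoint A // L b ≤ 1} =>
          (‖φn n (c.1 : A) - φ (c.1 : A)‖₊ : ℝ≥0∞)) ⟨((r : ℝ)⁻¹) • b, hLb'⟩
      have hnr : (‖(r : ℝ)‖₊ : ℝ≥0∞) = (r : ℝ≥0∞) := by
        simp [NNReal.nnnorm_eq]
      rw [ENNReal.coe_mul, hnr]
      exact mul_le_mul_right hle _
    have hz : Tendsto (fun n => (‖φn n (b : A) - φ (b : A)‖₊ : ℝ≥0∞)) atTop (𝓝 0) := by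
      have hmul : Tendsto (fun n => (r : ℝ≥0∞) * dL L (φn n) φ) atTop (𝓝 0) := by
        have := ENNReal.Tendsto.const_mul (a := (r : ℝ≥0∞)) hconv (Or.inr ENNReal.coe_ne_top)
        simpa using this
      exact tendsto_of_tendsto_of_tendsto_of_le_of_le tendsto_const_nhds hmul
        (fun n => zero_le) key
    rw [tendsto_iff_norm_sub_tendsto_zero]
    have hnn : Tendsto (fun n => ‖φn n (b : A) - φ (b : A)‖₊) atTop (𝓝 0) := by
      rw [← ENNReal.coe_zero] at hz
      exact ENNReal.tendsto_coe.mp hz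
    have := NNReal.tendsto_coe.mpr hnn
    simpa using this
  -- norms of the functionals
  have hbnd : ∀ (ψ : A →L[ℂ] ℂ), ‖ψ‖ = 1 → ∀ x : A, ‖ψ x‖ ≤ ‖x‖ := by
    intro ψ hψ x
    calc ‖ψ x‖ ≤ ‖ψ‖ * ‖x‖ := ψ.le_opNorm x
      _ = ‖x‖ := by rw [hψ, one_mul]
  -- Step 2: convergence on all self-adjoint elements by density
  have hsa : ∀ b : selfAdjoint A, Tendsto (fun n => φn n (b : A)) atTop (𝓝 (φ (b : A))) := by
    intro b
    rw [Metric.tendsto_atTop]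
    intro ε hε
    obtain ⟨b', hb', hdist⟩ := hdense.exists_dist_lt b (show (0:ℝ) < ε/3 by linarith)
    have h1 := hfin b' hb'
    rw [Metric.tendsto_atTop] at h1
    obtain ⟨N, hN⟩ := h1 (ε/3) (by linarith)
    refine ⟨N, fun n hn => ?_⟩
    have hdiff : ‖(b : A) - (b' : A)‖ < ε/3 := by
      rw [Subtype.dist_eq, dist_eq_norm] at hdist
      exact hdist
    have e1 : ‖φn n (b : A) - φn n (b' : A)‖ < ε/3 := by
      rw [← map_sub]
      exact lt_of_le_of_lt (hbnd _ (hφn n).2 _) hdiff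
    have e3 : ‖φ (b' : A) - φ (b : A)‖ < ε/3 := by
      rw [← map_sub]
      calc ‖φ ((b' : A) - (b : A))‖ ≤ ‖(b' : A) - (b : A)‖ := hbnd _ hφ.2 _
        _ = ‖(b : A) - (b' : A)‖ := norm_sub_rev _ _
        _ < ε/3 := hdiff
    have e2 := hN n hn
    rw [dist_eq_norm] at e2 ⊢
    calc ‖φn n (b : A) - φ (b : A)‖
        ≤ ‖φn n (b : A) - φn n (b' : A)‖ + ‖φn n (b' : A) - φ (b' : A)‖
          + ‖φ (b' : A) - φ (b : A)‖ := by
          have := norm_add₃_le (a := φn n (b : A) - φn n (b' : A))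
            (b := φn n (b' : A) - φ (b' : A)) (c := φ (b' : A) - φ (b : A))
          simpa using this
      _ < ε/3 + ε/3 + ε/3 := by gcongr
      _ = ε := by ring
  -- Step 3: decompose a general element into real and imaginary parts
  intro a
  have hdecomp : ∀ ψ : A →L[ℂ] ℂ, ψ a = ψ ((realPart a : A)) + Complex.I * ψ ((imaginaryPart a : A)) := by
    intro ψ
    conv_lhs => rw [← realPart_add_I_smul_imaginaryPart a]
    rw [map_add, map_smul, smul_eq_mul]
  simp only [hdecomp]
  exact (hsa (realPart a)).add ((hsa (imaginaryPart a)).const_mul _)
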